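/- Assume 0 < α_0 < |α_τ|, where |α_τ| := min_{0<μ<N} |α_μ|, and define f : [0, π] → ℝ by f(Ψ) = Σ_{μ=1}^{N−1} arcsin((α_0/|α_μ|) sin Ψ). Then f is strictly concave on (0, π), i.e. its second derivative is strictly negative there; and if additionally α_0 ≤ α_(c) := (Σ_{μ=1}^{N−1} |α_μ|^{−1})^{−1}, then f(Ψ) < Ψ for all Ψ ∈ (0, π]. -/

import Mathlib

open Real Finset

lemma abs_csin_lt_one {c : ℝ} (hc0 : 0 < c) (hc1 : c < 1) (x : ℝ) :
    |c * Real.sin x| < 1 := by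
  rw [abs_mul]
  calc |c| * |Real.sin x| ≤ |c| * 1 :=
        mul_le_mul_of_nonneg_left (Real.abs_sin_le_one x) (abs_nonneg c)
    _ = |c| := mul_one _
    _ < 1 := by rw [abs_of_pos hc0]; exact hc1

lemma w_pos {c : ℝ} (hc0 : 0 < c) (hc1 : c < 1) (x : ℝ) :
    0 < 1 - (c * Real.sin x) ^ 2 := by
  have h := abs_csin_lt_one hc0 hc1 x
  have := abs_lt.1 h
  nlinarith [this.1, this.2]

lemma hasDerivAt_g {c : ℝ} (hc0 : 0 < c) (hc1 : c < 1) (x : ℝ) :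
    HasDerivAt (fun x => Real.arcsin (c * Real.sin x))
      (c * Real.cos x / Real.sqrt (1 - (c * Real.sin x) ^ 2)) x := by
  have habs := abs_lt.1 (abs_csin_lt_one hc0 hc1 x)
  have h1 : c * Real.sin x ≠ -1 := by linarith [habs.1]
  have h2 : c * Real.sin x ≠ 1 := by linarith [habs.2]
  have := (Real.hasDerivAt_arcsin h1 h2).comp x ((Real.hasDerivAt_sin x).const_mul c)
  refine this.congr_deriv ?_
  field_simp

lemma hasDerivAt_g' {c : ℝ} (hc0 : 0 < c) (hc1 : c < 1) (x : ℝ) :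
    HasDerivAt (fun x => c * Real.cos x / Real.sqrt (1 - (c * Real.sin x) ^ 2))
      (c * Real.sin x * (c ^ 2 - 1) /
        (Real.sqrt (1 - (c * Real.sin x) ^ 2)) ^ 3) x := by
  have hw : 0 < 1 - (c * Real.sin x) ^ 2 := w_pos hc0 hc1 x
  have hs : 0 < Real.sqrt (1 - (c * Real.sin x) ^ 2) := Real.sqrt_pos.2 hw
  have hsq : (Real.sqrt (1 - (c * Real.sin x) ^ 2)) ^ 2 = 1 - (c * Real.sin x) ^ 2 :=
    Real.sq_sqrt hw.le
  -- numerator: u = c * cos x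
  have hu : HasDerivAt (fun x => c * Real.cos x) (c * (-Real.sin x)) x :=
    (Real.hasDerivAt_cos x).const_mul c
  -- inner of sqrt : w = 1 - (c * sin x)^2
  have hwder : HasDerivAt (fun x => 1 - (c * Real.sin x) ^ 2)
      (-(2 * (c * Real.sin x) ^ 1 * (c * Real.cos x))) x := by
    have : HasDerivAt (fun x => (c * Real.sin x) ^ 2)
        (2 * (c * Real.sin x) ^ 1 * (c * Real.cos x)) x :=
      ((Real.hasDerivAt_sin x).const_mul c).pow 2
    simpa using this.const_sub 1
  have hv : HasDerivAt (fun x => Real.sqrt (1 - (c * Real.sin x) ^ 2))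
      (-(2 * (c * Real.sin x) ^ 1 * (c * Real.cos x)) /
        (2 * Real.sqrt (1 - (c * Real.sin x) ^ 2))) x :=
    (Real.hasDerivAt_sqrt hw.ne').comp x hwder |>.congr_deriv (by ring)
  have := hu.div hv hs.ne'
  refine this.congr_deriv ?_
  symm
  have key : c * Real.sin x * (c ^ 2 - 1) = -c * Real.sin x * (Real.sqrt (1 - (c * Real.sin x) ^ 2)) ^ 2 + c ^ 3 * Real.sin x * Real.cos x ^ 2 := by
    rw [hsq]; linear_combination (-c ^ 3 * Real.sin x) * Real.sin_sq_add_cos_sq x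
  rw [key]
  field_simp
  ring

lemma arcsin_mul_lt {c t : ℝ} (hc0 : 0 < c) (hc1 : c < 1) (ht0 : 0 < t) (ht1 : t ≤ 1) :
    Real.arcsin (c * t) < c * Real.arcsin t := by
  set θ := Real.arcsin t with hθdef
  have hθ0 : 0 < θ := Real.arcsin_pos.2 ht0
  have hθle : θ ≤ π / 2 := Real.arcsin_le_pi_div_two t
  have hθπ : θ ≤ π := hθle.trans (by linarith [Real.pi_pos])
  -- strict concavity of sin: sin (c θ) > c * sin θ
  have hsin : c * Real.sin θ < Real.sin (c * θ) := by
    have h := strictConcaveOn_sin_Icc.2 (x := 0) (y := θ)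
      ⟨le_rfl, Real.pi_pos.le⟩ ⟨hθ0.le, hθπ⟩ hθ0.ne (by linarith : (0:ℝ) < 1 - c) hc0
      (by ring : (1 - c) + c = 1)
    simpa [Real.sin_zero] using h
  have hsinθ : Real.sin θ = t := Real.sin_arcsin (by linarith) ht1
  rw [hsinθ] at hsin
  have hcθ : c * θ ∈ Set.Icc (-(π/2)) (π/2) := by
    constructor
    · nlinarith [Real.pi_pos]
    · nlinarith
  have hct : c * t ∈ Set.Icc (-1 : ℝ) 1 := by
    constructor <;> nlinarith
  exact (Real.arcsin_lt_iff_lt_sin hct hcθ).2 hsin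

/-- In the regular domain `0 < α₀ < |α_τ|` the fixed point function
`f(Ψ) = Σ_{μ=1}^{N−1} arcsin((α₀/|α_μ|) sin Ψ)` has strictly negative second
derivative on `(0, π)`; and if moreover `α₀ ≤ α_(c) := (Σ |α_μ|⁻¹)⁻¹`, then
`f(Ψ) < Ψ` for all `Ψ ∈ (0, π]`. -/
theorem fixed_point_function_concave_and_below_diagonal (N : ℕ) (hN : 2 < N)
    (α : ℕ → ℝ) (hα0 : 0 < α 0) (hαμ : ∀ μ ∈ Finset.Ico 1 N, α μ < 0)
    (hreg : ∀ μ ∈ Finset.Ico 1 N, α 0 < |α μ|) :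
    (∀ Ψ ∈ Set.Ioo (0 : ℝ) π,
      deriv (deriv (fun x : ℝ =>
        ∑ μ ∈ Finset.Ico 1 N, Real.arcsin ((α 0 / |α μ|) * Real.sin x))) Ψ < 0) ∧
    (α 0 ≤ (∑ μ ∈ Finset.Ico 1 N, |α μ|⁻¹)⁻¹ →
      ∀ Ψ ∈ Set.Ioc (0 : ℝ) π,
        (∑ μ ∈ Finset.Ico 1 N, Real.arcsin ((α 0 / |α μ|) * Real.sin Ψ)) < Ψ) := by
  have hNE : (Finset.Ico 1 N).Nonempty := ⟨1, by simp; omega⟩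
  have hc : ∀ μ ∈ Finset.Ico 1 N, 0 < α 0 / |α μ| ∧ α 0 / |α μ| < 1 := by
    intro μ hμ
    have habs : 0 < |α μ| := lt_trans hα0 (hreg μ hμ)
    exact ⟨div_pos hα0 habs, (div_lt_one habs).2 (hreg μ hμ)⟩
  constructor
  · intro Ψ hΨ
    have hsinΨ : 0 < Real.sin Ψ := Real.sin_pos_of_pos_of_lt_pi hΨ.1 hΨ.2
    have hderiv : deriv (fun x : ℝ =>
        ∑ μ ∈ Finset.Ico 1 N, Real.arcsin ((α 0 / |α μ|) * Real.sin x)) =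
        fun x => ∑ μ ∈ Finset.Ico 1 N,
          (α 0 / |α μ|) * Real.cos x / Real.sqrt (1 - ((α 0 / |α μ|) * Real.sin x) ^ 2) := by
      funext x
      exact (HasDerivAt.fun_sum fun μ hμ => hasDerivAt_g (hc μ hμ).1 (hc μ hμ).2 x).deriv
    rw [hderiv]
    have h2 : HasDerivAt (fun x => ∑ μ ∈ Finset.Ico 1 N,
          (α 0 / |α μ|) * Real.cos x / Real.sqrt (1 - ((α 0 / |α μ|) * Real.sin x) ^ 2))
        (∑ μ ∈ Finset.Ico 1 N,
          (α 0 / |α μ|) * Real.sin Ψ * ((α 0 / |α μ|) ^ 2 - 1) /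
            (Real.sqrt (1 - ((α 0 / |α μ|) * Real.sin Ψ) ^ 2)) ^ 3) Ψ :=
      HasDerivAt.fun_sum fun μ hμ => hasDerivAt_g' (hc μ hμ).1 (hc μ hμ).2 Ψ
    rw [h2.deriv]
    have : ∀ μ ∈ Finset.Ico 1 N,
        (α 0 / |α μ|) * Real.sin Ψ * ((α 0 / |α μ|) ^ 2 - 1) /
          (Real.sqrt (1 - ((α 0 / |α μ|) * Real.sin Ψ) ^ 2)) ^ 3 < 0 := by
      intro μ hμ
      obtain ⟨h0, h1⟩ := hc μ hμ
      have hs : 0 < Real.sqrt (1 - ((α 0 / |α μ|) * Real.sin Ψ) ^ 2) :=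
        Real.sqrt_pos.2 (w_pos h0 h1 Ψ)
      apply div_neg_of_neg_of_pos
      · have : (α 0 / |α μ|) ^ 2 - 1 < 0 := by nlinarith
        exact mul_neg_of_pos_of_neg (mul_pos h0 hsinΨ) this
      · positivity
    calc (∑ μ ∈ Finset.Ico 1 N,
          (α 0 / |α μ|) * Real.sin Ψ * ((α 0 / |α μ|) ^ 2 - 1) /
            (Real.sqrt (1 - ((α 0 / |α μ|) * Real.sin Ψ) ^ 2)) ^ 3)
        < ∑ μ ∈ Finset.Ico 1 N, (0 : ℝ) :=
          Finset.sum_lt_sum_of_nonempty hNE this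
      _ = 0 := Finset.sum_const_zero
  · intro hαc Ψ hΨ
    rcases eq_or_lt_of_le hΨ.2 with hpi | hlt
    · -- Ψ = π : sin Ψ = 0 and the sum is 0 < π
      subst hpi
      simp only [Real.sin_pi, mul_zero, Real.arcsin_zero, Finset.sum_const_zero]
      exact Real.pi_pos
    · have hsinΨ : 0 < Real.sin Ψ := Real.sin_pos_of_pos_of_lt_pi hΨ.1 hlt
      have hsin1 : Real.sin Ψ ≤ 1 := Real.sin_le_one Ψ
      -- Σ c_μ ≤ 1
      have hSpos : 0 < ∑ μ ∈ Finset.Ico 1 N, |α μ|⁻¹ := by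
        apply Finset.sum_pos _ hNE
        intro μ hμ
        exact inv_pos.2 (lt_trans hα0 (hreg μ hμ))
      have hsum1 : (∑ μ ∈ Finset.Ico 1 N, α 0 / |α μ|) ≤ 1 := by
        have : α 0 * (∑ μ ∈ Finset.Ico 1 N, |α μ|⁻¹) ≤ 1 := by
          have h := mul_le_mul_of_nonneg_right hαc hSpos.le
          rwa [inv_mul_cancel₀ hSpos.ne'] at h
        calc (∑ μ ∈ Finset.Ico 1 N, α 0 / |α μ|)
            = α 0 * (∑ μ ∈ Finset.Ico 1 N, |α μ|⁻¹) := by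
              rw [Finset.mul_sum]; exact Finset.sum_congr rfl fun μ _ => (div_eq_mul_inv _ _)
          _ ≤ 1 := this
      set θ := Real.arcsin (Real.sin Ψ) with hθdef
      have hθ0 : 0 < θ := Real.arcsin_pos.2 hsinΨ
      have hθΨ : θ ≤ Ψ := by
        rcases le_or_gt Ψ (π / 2) with h | h
        · rw [hθdef, Real.arcsin_sin (by linarith [hΨ.1, Real.pi_pos] : -(π/2) ≤ Ψ) h]
        · exact le_of_lt (lt_of_le_of_lt (Real.arcsin_le_pi_div_two _) h)
      calc (∑ μ ∈ Finset.Ico 1 N, Real.arcsin ((α 0 / |α μ|) * Real.sin Ψ))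
          < ∑ μ ∈ Finset.Ico 1 N, (α 0 / |α μ|) * θ := by
            apply Finset.sum_lt_sum_of_nonempty hNE
            intro μ hμ
            exact arcsin_mul_lt (hc μ hμ).1 (hc μ hμ).2 hsinΨ hsin1
        _ = (∑ μ ∈ Finset.Ico 1 N, α 0 / |α μ|) * θ := by rw [Finset.sum_mul]
        _ ≤ 1 * θ := mul_le_mul_of_nonneg_right hsum1 hθ0.le
        _ = θ := one_mul θ
        _ ≤ Ψ := hθΨ
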